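/- The polynomial P₇₂(z) = (1 − z)⁹ − (135/16)(1 − z)⁶ z² + (60345/4096)(1 − z)³ z⁴ − (53325/32768) z⁶ is strictly decreasing on the interval [0, 1/4]; in particular its derivative is negative for all z in [0, 1/4]. -/

import Mathlib

/-- Denominator polynomial of the secrecy function of the extremal even
unimodular lattice in dimension 72. -/
noncomputable def P72 (z : ℝ) : ℝ :=
  (1 - z) ^ 9 - 135 / 16 * (1 - z) ^ 6 * z ^ 2 + 60345 / 4096 * (1 - z) ^ 3 * z ^ 4
    - 53325 / 32768 * z ^ 6

lemma P72_hasDerivAt (z : ℝ) :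
    HasDerivAt P72
      (-9 + 441/8*z - 801/8*z^2 + 58041/1024*z^3 - 29655/4096*z^4 + 801/16384*z^5
        - 3087/4096*z^6 + 9/2*z^7 - 9*z^8) z := by
  have hfun : P72 = fun z : ℝ =>
      ((1 - z)^9 - 135/16*((1-z)^6*z^2) + 60345/4096*((1-z)^3*z^4)) - 53325/32768*z^6 := by
    funext z; unfold P72; ring
  rw [hfun]
  have h1 : HasDerivAt (fun z : ℝ => 1 - z) (-1) z := by
    simpa using (hasDerivAt_id z).const_sub 1
  have h := (((h1.pow 9).sub
      (((h1.pow 6).mul (hasDerivAt_pow 2 z)).const_mul (135/16 : ℝ))).add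
      (((h1.pow 3).mul (hasDerivAt_pow 4 z)).const_mul (60345/4096 : ℝ))).sub
      ((hasDerivAt_pow 6 z).const_mul (53325/32768 : ℝ))
  convert h using 1
  · rfl
  · rfl
  · rfl
  push_cast
  simp only [Pi.pow_apply]
  ring

lemma P72_deriv_neg (z : ℝ) (h0 : 0 ≤ z) (h1 : z ≤ 1/4) : deriv P72 z < 0 := by
  rw [(P72_hasDerivAt z).deriv]
  nlinarith [sq_nonneg z, sq_nonneg (z - 1/4), mul_nonneg h0 h0,
    pow_nonneg h0 3, pow_nonneg h0 4, pow_nonneg h0 5, pow_nonneg h0 6,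
    mul_nonneg (pow_nonneg h0 4) (sub_nonneg.2 h1),
    mul_nonneg (pow_nonneg h0 6) (sq_nonneg (z - 3/4)),
    mul_nonneg (mul_nonneg (pow_nonneg h0 4) (sub_nonneg.2 h1)) (sub_nonneg.2 h1),
    mul_nonneg (pow_nonneg (sub_nonneg.2 h1) 2) (pow_nonneg h0 2)]

theorem P72_strictAnti :
    StrictAntiOn P72 (Set.Icc (0 : ℝ) (1 / 4)) ∧
      ∀ z ∈ Set.Icc (0 : ℝ) (1 / 4), deriv P72 z < 0 := by
  have hderiv : ∀ z ∈ Set.Icc (0 : ℝ) (1 / 4), deriv P72 z < 0 := fun z hz =>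
    P72_deriv_neg z hz.1 hz.2
  refine ⟨?_, hderiv⟩
  apply strictAntiOn_of_deriv_neg (convex_Icc _ _)
  · exact fun z _ => ((P72_hasDerivAt z).differentiableAt.continuousAt).continuousWithinAt
  · intro z hz
    rw [interior_Icc] at hz
    exact P72_deriv_neg z hz.1.le hz.2.le
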